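/- Let F ∈ R[x₁,…,xₙ] be a quasiconvex polynomial, a ∈ R^n a fixed point, and b ∈ R^n a nonzero fixed vector. If the univariate polynomial λ ↦ F(a + λb) is constant, then for every x ∈ R^n the polynomial λ ↦ F(x + λb) is constant. -/
import Mathlib


open MvPolynomial Filter

theorem stmt2 {n : ℕ} (F : MvPolynomial (Fin n) ℝ)
    (hq : ∀ α : ℝ, Convex ℝ {x : Fin n → ℝ | eval x F ≤ α})
    (a b : Fin n → ℝ) (hb : b ≠ 0)
    (hconst : ∀ l₁ l₂ : ℝ, eval (a + l₁ • b) F = eval (a + l₂ • b) F) :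
    ∀ x : Fin n → ℝ, ∀ l₁ l₂ : ℝ, eval (x + l₁ • b) F = eval (x + l₂ • b) F := by
  intro x
  set c : ℝ := eval a F with hc
  have hcval : ∀ l : ℝ, eval (a + l • b) F = c := by
    intro l
    have := hconst l 0
    simpa using this
  -- Step 1: boundedness above of μ ↦ F(x + μ b)
  have hbound : ∀ μ : ℝ, eval (x + μ • b) F ≤ max (eval x F) c := by
    intro μ
    set α : ℝ := max (eval x F) c with hα
    have hseg : ∀ t : ℝ, 0 < t → t ≤ 1 →
        eval (x + μ • b + t • (a - x)) F ≤ α := by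
      intro t ht ht1
      have hx : x ∈ {y : Fin n → ℝ | eval y F ≤ α} := by
        simp only [Set.mem_setOf_eq]; exact le_max_left _ _
      have ha' : a + (μ / t) • b ∈ {y : Fin n → ℝ | eval y F ≤ α} := by
        simp only [Set.mem_setOf_eq, hcval]
        exact le_max_right _ _
      have hmem := hq α hx ha' (by linarith : (0:ℝ) ≤ 1 - t) ht.le (by ring)
      have hpt : (1 - t) • x + t • (a + (μ / t) • b) = x + μ • b + t • (a - x) := by
        have : t • ((μ / t) • b) = μ • b := by
          rw [smul_smul, mul_div_cancel₀ _ (ne_of_gt ht)]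
        rw [smul_add, this, sub_smul, one_smul, smul_sub]
        abel
      rwa [hpt] at hmem
    -- take t → 0⁺
    have hcont : Continuous fun t : ℝ => eval (x + μ • b + t • (a - x)) F := by
      exact (MvPolynomial.continuous_eval F).comp
        (continuous_const.add (continuous_id.smul continuous_const))
    have htend : Tendsto (fun t : ℝ => eval (x + μ • b + t • (a - x)) F)
        (nhdsWithin 0 (Set.Ioi 0)) (nhds (eval (x + μ • b) F)) := by
      have h0 : eval (x + μ • b + (0:ℝ) • (a - x)) F = eval (x + μ • b) F := by
        simp
      have := (hcont.tendsto 0).mono_left (nhdsWithin_le_nhds (s := Set.Ioi (0:ℝ)))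
      rwa [h0] at this
    refine le_of_tendsto htend ?_
    filter_upwards [Ioc_mem_nhdsGT_of_mem (Set.left_mem_Ico.2 one_pos)] with t ht
    exact hseg t ht.1 ht.2
  -- Step 2: the restriction is a univariate polynomial
  set p : Polynomial ℝ :=
    MvPolynomial.eval₂ Polynomial.C
      (fun i => Polynomial.C (x i) + Polynomial.C (b i) * Polynomial.X) F with hp
  have hpeval : ∀ l : ℝ, p.eval l = eval (x + l • b) F := by
    intro l
    rw [hp]
    rw [show (Polynomial.eval l : Polynomial ℝ → ℝ) = Polynomial.evalRingHom l from rfl]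
    rw [MvPolynomial.eval₂_comp_left (Polynomial.evalRingHom l)]
    have h1 : (Polynomial.evalRingHom l).comp (Polynomial.C : ℝ →+* Polynomial ℝ)
        = RingHom.id ℝ :=
      RingHom.ext fun r => Polynomial.eval_C
    have h2 : (⇑(Polynomial.evalRingHom l) ∘ fun i =>
        (Polynomial.C (x i) + Polynomial.C (b i) * Polynomial.X)) = x + l • b := by
      funext i
      simp only [Function.comp_apply, Polynomial.coe_evalRingHom, Polynomial.eval_add,
        Polynomial.eval_C, Polynomial.eval_mul, Polynomial.eval_X, Pi.add_apply,
        Pi.smul_apply, smul_eq_mul, mul_comm]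
    rw [h1, h2, MvPolynomial.eval₂_id]
  have hpbound : ∀ l : ℝ, p.eval l ≤ max (eval x F) c := by
    intro l; rw [hpeval]; exact hbound l
  -- Step 3: a bounded-above polynomial whose負... conclude constancy
  intro l₁ l₂
  by_contra hne
  have hdeg : 0 < p.degree := by
    rcases le_or_gt p.degree 0 with h | h
    · exfalso
      have hr := Polynomial.degree_le_zero_iff.mp h
      apply hne
      rw [← hpeval, ← hpeval, hr, Polynomial.eval_C, Polynomial.eval_C]
    · exact h
  have hnotTop : ∀ q : Polynomial ℝ, (∀ l, q.eval l ≤ max (eval x F) c) →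
      ¬ Tendsto (fun l => q.eval l) atTop atTop := by
    intro q hq' h
    obtain ⟨l, hl⟩ := (h.eventually (eventually_gt_atTop (max (eval x F) c))).exists
    exact absurd (hq' l) (not_le.mpr hl)
  have hlead : p.leadingCoeff ≤ 0 := by
    by_contra h
    exact hnotTop p hpbound
      (Polynomial.tendsto_atTop_of_leadingCoeff_nonneg p hdeg (le_of_lt (not_le.mp h)))
  have htop : Tendsto (fun l => p.eval l) atTop atBot :=
    Polynomial.tendsto_atBot_of_leadingCoeff_nonpos p hdeg hlead
  -- behavior at -∞ via composition with -X
  set q : Polynomial ℝ := p.comp (-Polynomial.X) with hqdef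
  have hqeval : ∀ l : ℝ, q.eval l = p.eval (-l) := by
    intro l; simp [hqdef]
  have hqdeg : 0 < q.degree := by
    rw [← Polynomial.natDegree_pos_iff_degree_pos] at hdeg ⊢
    rw [hqdef, Polynomial.natDegree_comp]
    simpa using hdeg
  have hqbound : ∀ l : ℝ, q.eval l ≤ max (eval x F) c := by
    intro l; rw [hqeval]; exact hpbound _
  have hqlead : q.leadingCoeff ≤ 0 := by
    by_contra h
    exact hnotTop q hqbound
      (Polynomial.tendsto_atTop_of_leadingCoeff_nonneg q hqdeg (le_of_lt (not_le.mp h)))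
  have hbot : Tendsto (fun l => q.eval l) atTop atBot :=
    Polynomial.tendsto_atBot_of_leadingCoeff_nonpos q hqdeg hqlead
  -- find T with p(T) < p(0) and p(-T) < p(0)
  obtain ⟨T, hT1, hT2⟩ :=
    ((htop.eventually (eventually_lt_atBot (p.eval 0))).and
      (hbot.eventually (eventually_lt_atBot (p.eval 0)))).exists
  rw [hqeval] at hT2
  -- quasiconvexity contradiction at midpoint
  set α' : ℝ := max (p.eval T) (p.eval (-T)) with hα'
  have hm1 : x + T • b ∈ {y : Fin n → ℝ | eval y F ≤ α'} := by
    simp only [Set.mem_setOf_eq, ← hpeval]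
    exact le_max_left _ _
  have hm2 : x + (-T) • b ∈ {y : Fin n → ℝ | eval y F ≤ α'} := by
    simp only [Set.mem_setOf_eq, ← hpeval]
    exact le_max_right _ _
  have hmid := hq α' hm1 hm2 (by norm_num : (0:ℝ) ≤ 1/2) (by norm_num : (0:ℝ) ≤ 1/2)
    (by norm_num)
  have hptmid : (1/2 : ℝ) • (x + T • b) + (1/2 : ℝ) • (x + (-T) • b) = x := by
    funext i
    simp [Pi.smul_apply, Pi.add_apply]
    ring
  rw [hptmid] at hmid
  have hx0 : eval x F = p.eval 0 := by
    rw [hpeval]; simp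
  rw [Set.mem_setOf_eq, hx0] at hmid
  have : α' < p.eval 0 := max_lt hT1 hT2
  linarith
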